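/- Let F_∅ be the set of ordered pairs (i,j) of terminals with R(t_i,t_j) ∩ T = {t_i,t_j}. Then F_∅ is a generating set: any directed rectilinear network containing a directed Manhattan path for every ordered pair in F_∅ contains a directed Manhattan path for every ordered pair of terminals. -/

import Mathlib

open MeasureTheory

noncomputable section

/-- l1 (Manhattan) distance in the plane. -/
def d1 (p q : ℝ × ℝ) : ℝ := |p.1 - q.1| + |p.2 - q.2|

/-- Smallest axis-parallel rectangle containing `a` and `b`. -/
def Rect (a b : ℝ × ℝ) : Set (ℝ × ℝ) :=
  {m | min a.1 b.1 ≤ m.1 ∧ m.1 ≤ max a.1 b.1 ∧ min a.2 b.2 ≤ m.2 ∧ m.2 ≤ max a.2 b.2}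

/-- Length of a polygonal path given by its list of vertices. -/
def pathLen : List (ℝ × ℝ) → ℝ
  | [] => 0
  | [_] => 0
  | p :: q :: rest => d1 p q + pathLen (q :: rest)

/-- `P` is a path starting at `a` and ending at `b`. -/
def IsPathFrom (P : List (ℝ × ℝ)) (a b : ℝ × ℝ) : Prop :=
  P.head? = some a ∧ P.getLast? = some b

/-- The set of points of the polygonal path `P`. -/
def polyline (P : List (ℝ × ℝ)) : Set (ℝ × ℝ) :=
  ⋃ pr ∈ P.zip P.tail, segment ℝ pr.1 pr.2

/-- There is a directed Manhattan path from `a` to `b` using the directed edges of `N`. -/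
def DirManPath (N : Set ((ℝ × ℝ) × (ℝ × ℝ))) (a b : ℝ × ℝ) : Prop :=
  ∃ P : List (ℝ × ℝ), IsPathFrom P a b ∧ P.Chain' (fun u v => (u, v) ∈ N) ∧
    pathLen P = d1 a b

lemma seg1 {x y z : ℝ} (h1 : min x z ≤ y) (h2 : y ≤ max x z) :
    |x - y| + |y - z| = |x - z| := by
  rcases le_total x z with h | h
  · rw [min_eq_left h] at h1; rw [max_eq_right h] at h2
    rw [abs_of_nonpos (by linarith), abs_of_nonpos (by linarith),
      abs_of_nonpos (by linarith)]; ring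
  · rw [min_eq_right h] at h1; rw [max_eq_left h] at h2
    rw [abs_of_nonneg (by linarith), abs_of_nonneg (by linarith),
      abs_of_nonneg (by linarith)]; ring

lemma betw_eq {x y z : ℝ} (h1 : min x z ≤ y) (h2 : y ≤ max x z)
    (h3 : min x y ≤ z) (h4 : z ≤ max x y) : y = z := by
  rcases le_total x z with h | h <;> rcases le_total x y with h' | h' <;>
    simp [min_def, max_def, h, h'] at h1 h2 h3 h4 <;> linarith

lemma d1_rect {a b c : ℝ × ℝ} (hc : c ∈ Rect a b) : d1 a c + d1 c b = d1 a b := by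
  obtain ⟨h1, h2, h3, h4⟩ := hc
  simp only [d1]
  rw [show |a.1 - c.1| + |a.2 - c.2| + (|c.1 - b.1| + |c.2 - b.2|)
      = (|a.1 - c.1| + |c.1 - b.1|) + (|a.2 - c.2| + |c.2 - b.2|) by ring,
    seg1 h1 h2, seg1 h3 h4]

lemma rect_sub {a b c : ℝ × ℝ} (hc : c ∈ Rect a b) : Rect a c ⊆ Rect a b := by
  obtain ⟨h1, h2, h3, h4⟩ := hc
  rintro m ⟨m1, m2, m3, m4⟩
  exact ⟨le_trans (le_min (min_le_left _ _) h1) m1,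
    le_trans m2 (max_le (le_max_left _ _) h2),
    le_trans (le_min (min_le_left _ _) h3) m3,
    le_trans m4 (max_le (le_max_left _ _) h4)⟩

lemma rect_sub' {a b c : ℝ × ℝ} (hc : c ∈ Rect a b) : Rect c b ⊆ Rect a b := by
  obtain ⟨h1, h2, h3, h4⟩ := hc
  rintro m ⟨m1, m2, m3, m4⟩
  exact ⟨le_trans (le_min h1 (min_le_right _ _)) m1,
    le_trans m2 (max_le h2 (le_max_right _ _)),
    le_trans (le_min h3 (min_le_right _ _)) m3,
    le_trans m4 (max_le h4 (le_max_right _ _))⟩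

lemma eq_of_mem_mem {a b c : ℝ × ℝ} (hc : c ∈ Rect a b) (hb : b ∈ Rect a c) : b = c := by
  obtain ⟨h1, h2, h3, h4⟩ := hc
  obtain ⟨g1, g2, g3, g4⟩ := hb
  exact Prod.ext (betw_eq g1 g2 h1 h2) (betw_eq g3 g4 h3 h4)

lemma rect_comm (a b : ℝ × ℝ) : Rect a b = Rect b a := by
  unfold Rect; rw [min_comm, max_comm, min_comm a.2, max_comm a.2]

lemma eq_of_mem_mem' {a b c : ℝ × ℝ} (hc : c ∈ Rect a b) (ha : a ∈ Rect c b) : a = c :=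
  eq_of_mem_mem (rect_comm a b ▸ hc) (rect_comm c b ▸ ha)

lemma mem_rect_left (a b : ℝ × ℝ) : a ∈ Rect a b :=
  ⟨min_le_left _ _, le_max_left _ _, min_le_left _ _, le_max_left _ _⟩

lemma mem_rect_right (a b : ℝ × ℝ) : b ∈ Rect a b :=
  ⟨min_le_right _ _, le_max_right _ _, min_le_right _ _, le_max_right _ _⟩

lemma pathLen_append : ∀ (P : List (ℝ × ℝ)) (c : ℝ × ℝ) (Q : List (ℝ × ℝ)),
    P.getLast? = some c → pathLen (P ++ Q) = pathLen P + pathLen (c :: Q)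
  | [], c, Q, h => by simp at h
  | [x], c, Q, h => by
      simp at h; subst h; simp [pathLen]
  | x :: y :: rest, c, Q, h => by
      have h' : (y :: rest).getLast? = some c := by
        rw [List.getLast?_cons_cons] at h; exact h
      have ih := pathLen_append (y :: rest) c Q h'
      simp only [List.cons_append] at ih
      show d1 x y + pathLen (y :: (rest ++ Q)) = d1 x y + pathLen (y :: rest) + pathLen (c :: Q)
      rw [ih]; ring

lemma dmp_trans {N : Set ((ℝ × ℝ) × (ℝ × ℝ))} {a b c : ℝ × ℝ}
    (h1 : DirManPath N a c) (h2 : DirManPath N c b)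
    (hd : d1 a c + d1 c b = d1 a b) : DirManPath N a b := by
  obtain ⟨P, ⟨hPh, hPl⟩, hPc, hPlen⟩ := h1
  obtain ⟨Q, ⟨hQh, hQl⟩, hQc, hQlen⟩ := h2
  match Q with
  | [] => simp at hQh
  | [c0] =>
      simp at hQh hQl
      have hcb : c = b := hQh.symm.trans hQl
      subst hcb
      refine ⟨P, ⟨hPh, hPl⟩, hPc, ?_⟩
      rw [hPlen]
  | c0 :: q :: Q'' =>
      simp only [List.head?_cons, Option.some.injEq] at hQh; subst hQh
      refine ⟨P ++ (q :: Q''), ⟨?_, ?_⟩, ?_, ?_⟩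
      · rcases P with _ | ⟨p0, P'⟩
        · simp at hPh
        · simpa using hPh
      · rw [List.getLast?_append_of_ne_nil P (by simp : (q :: Q'') ≠ [])]
        rw [List.getLast?_cons_cons] at hQl; exact hQl
      · change List.IsChain _ _
        rw [List.isChain_append]
        refine ⟨hPc, (List.isChain_cons.mp hQc).2, ?_⟩
        intro x hx y hy
        rw [hPl] at hx; simp at hx hy; subst hx; subst hy
        exact (List.isChain_cons_cons.mp hQc).1
      · rw [pathLen_append P c0 (q :: Q'') hPl, hPlen, hQlen, hd]

/-- The set of empty ordered pairs is a generating set: a directed network containing a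
directed Manhattan path for every empty pair contains one for every ordered pair. -/
theorem stmt8 (T : Set (ℝ × ℝ)) (hfin : T.Finite)
    (N : Set ((ℝ × ℝ) × (ℝ × ℝ)))
    (hgen : ∀ a ∈ T, ∀ b ∈ T, Rect a b ∩ T = {a, b} → DirManPath N a b) :
    ∀ a ∈ T, ∀ b ∈ T, DirManPath N a b := by
  classical
  have key : ∀ n : ℕ, ∀ a ∈ T, ∀ b ∈ T,
      (hfin.toFinset.filter (fun x => x ∈ Rect a b)).card ≤ n → DirManPath N a b := by
    intro n
    induction n with
    | zero =>
      intro a ha b hb hcard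
      exfalso
      have hmem : a ∈ hfin.toFinset.filter (fun x => x ∈ Rect a b) := by
        simp [Set.Finite.mem_toFinset, ha, mem_rect_left]
      have := Finset.card_pos.mpr ⟨a, hmem⟩
      omega
    | succ n ih =>
      intro a ha b hb hcard
      by_cases hE : Rect a b ∩ T = {a, b}
      · exact hgen a ha b hb hE
      · have hsub : ({a, b} : Set (ℝ × ℝ)) ⊆ Rect a b ∩ T := by
          intro x hx
          simp only [Set.mem_insert_iff, Set.mem_singleton_iff] at hx
          rcases hx with rfl | rfl
          · exact ⟨mem_rect_left _ _, ha⟩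
          · exact ⟨mem_rect_right _ _, hb⟩
        obtain ⟨c, hcmem, hc⟩ : ∃ c ∈ Rect a b ∩ T, c ∉ ({a, b} : Set (ℝ × ℝ)) := by
          by_contra h
          push_neg at h
          exact hE (Set.Subset.antisymm h hsub)
        obtain ⟨hcR, hcT⟩ := hcmem
        have hcab : c ≠ a ∧ c ≠ b := by simpa [Set.mem_insert_iff] using hc
        have habmem : b ∈ hfin.toFinset.filter (fun x => x ∈ Rect a b) := by
          simp [Set.Finite.mem_toFinset, hb, mem_rect_right]
        have haabmem : a ∈ hfin.toFinset.filter (fun x => x ∈ Rect a b) := by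
          simp [Set.Finite.mem_toFinset, ha, mem_rect_left]
        have hlt1 : (hfin.toFinset.filter (fun x => x ∈ Rect a c)).card
            < (hfin.toFinset.filter (fun x => x ∈ Rect a b)).card := by
          apply Finset.card_lt_card
          constructor
          · exact Finset.monotone_filter_right _ (fun x _ hx => rect_sub hcR hx)
          · intro hsf
            have := hsf habmem
            rw [Finset.mem_filter] at this
            exact hcab.2 (eq_of_mem_mem hcR this.2).symm
        have hlt2 : (hfin.toFinset.filter (fun x => x ∈ Rect c b)).card
            < (hfin.toFinset.filter (fun x => x ∈ Rect a b)).card := by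
          apply Finset.card_lt_card
          constructor
          · exact Finset.monotone_filter_right _ (fun x _ hx => rect_sub' hcR hx)
          · intro hsf
            have := hsf haabmem
            rw [Finset.mem_filter] at this
            exact hcab.1 (eq_of_mem_mem' hcR this.2).symm
        exact dmp_trans (ih a ha c hcT (by omega)) (ih c hcT b hb (by omega))
          (d1_rect hcR)
  intro a ha b hb
  exact key _ a ha b hb le_rfl
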